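/- Let 0 < α < 1 and μ > 0. Then for every x ∈ (0,1), the functions θ₊ and θ₋ satisfy the degenerate equation (x^α θ₊'(x))' = −μ² θ₊(x) and (x^α θ₋'(x))' = −μ² θ₋(x); that is, θ₊ and θ₋ are solutions of λ v + (x^α v')' = 0 on (0,1) with λ = μ². -/

import Mathlib

open Set

/-- The Bessel function of the first kind of real order `ν`. -/
noncomputable def besselJ (ν y : ℝ) : ℝ :=
  ∑' m : ℕ, ((-1) ^ m / (m.factorial * Real.Gamma (m + ν + 1))) *
    (y / 2) ^ (2 * (m : ℝ) + ν)

/-- `θ₊(x) = x^{(1-α)/2} J_{ν_α}((2/(2-α)) μ x^{(2-α)/2})`, `ν_α = (1-α)/(2-α)`. -/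
noncomputable def thetaP (α μ x : ℝ) : ℝ :=
  x ^ ((1 - α) / 2) * besselJ ((1 - α) / (2 - α)) (2 / (2 - α) * μ * x ^ ((2 - α) / 2))

/-- `θ₋(x) = x^{(1-α)/2} J_{-ν_α}((2/(2-α)) μ x^{(2-α)/2})`. -/
noncomputable def thetaM (α μ x : ℝ) : ℝ :=
  x ^ ((1 - α) / 2) * besselJ (-((1 - α) / (2 - α))) (2 / (2 - α) * μ * x ^ ((2 - α) / 2))

set_option maxHeartbeats 1000000 in
/-- Summability of the weighted coefficient series (ratio test). -/
lemma besselAux_summable (K ν : ℝ) (hK : 0 < K) (hν : -1 < ν) :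
    Summable (fun m : ℕ =>
      |((-1 : ℝ) ^ m / (m.factorial * Real.Gamma ((m : ℝ) + ν + 1))) * K ^ (2 * (m : ℝ) + ν)|
        * ((m : ℝ) + 1) ^ 2) := by
  set B : ℕ → ℝ := fun m =>
    K ^ (2 * (m : ℝ) + ν) / (m.factorial * Real.Gamma ((m : ℝ) + ν + 1)) * ((m : ℝ) + 1) ^ 2
    with hB
  have hΓpos : ∀ m : ℕ, 0 < Real.Gamma ((m : ℝ) + ν + 1) := by
    intro m
    apply Real.Gamma_pos_of_pos
    have : (0:ℝ) ≤ m := Nat.cast_nonneg m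
    linarith
  have hfacpos : ∀ m : ℕ, (0:ℝ) < m.factorial := fun m => by
    exact_mod_cast Nat.factorial_pos m
  have hBeq : ∀ m : ℕ,
      |((-1 : ℝ) ^ m / (m.factorial * Real.Gamma ((m : ℝ) + ν + 1))) * K ^ (2 * (m : ℝ) + ν)|
        * ((m : ℝ) + 1) ^ 2 = B m := by
    intro m
    have h1 : (0:ℝ) < m.factorial * Real.Gamma ((m : ℝ) + ν + 1) :=
      mul_pos (hfacpos m) (hΓpos m)
    have h2 : (0:ℝ) < K ^ (2 * (m : ℝ) + ν) := Real.rpow_pos_of_pos hK _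
    rw [hB, abs_mul, abs_div, abs_pow, abs_neg, abs_one, one_pow, abs_of_pos h1, abs_of_pos h2]
    ring
  have hBpos : ∀ m : ℕ, 0 < B m := by
    intro m
    have h1 : (0:ℝ) < m.factorial * Real.Gamma ((m : ℝ) + ν + 1) :=
      mul_pos (hfacpos m) (hΓpos m)
    have h2 : (0:ℝ) < K ^ (2 * (m : ℝ) + ν) := Real.rpow_pos_of_pos hK _
    have h3 : (0:ℝ) < ((m : ℝ) + 1) ^ 2 := by positivity
    exact mul_pos (div_pos h2 h1) h3
  have hsum : Summable B := by
    apply summable_of_ratio_norm_eventually_le (r := 1/2) (by norm_num)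
    obtain ⟨N, hN⟩ := exists_nat_ge (8 * K ^ 2)
    filter_upwards [Filter.eventually_ge_atTop (N + 1)] with m hm
    have hm1 : (1:ℝ) ≤ m := by exact_mod_cast Nat.one_le_iff_ne_zero.mpr (by omega)
    have hm8 : 8 * K ^ 2 ≤ m := le_trans hN (by exact_mod_cast Nat.le_of_succ_le hm)
    rw [Real.norm_of_nonneg (hBpos _).le, Real.norm_of_nonneg (hBpos _).le]
    have hνpos : (0:ℝ) < (m : ℝ) + ν + 1 := by linarith
    have hΓrec : Real.Gamma (((m : ℝ) + 1) + ν + 1)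
        = ((m : ℝ) + ν + 1) * Real.Gamma ((m : ℝ) + ν + 1) := by
      have := Real.Gamma_add_one (s := (m : ℝ) + ν + 1) (ne_of_gt hνpos)
      rw [show ((m : ℝ) + 1) + ν + 1 = (m : ℝ) + ν + 1 + 1 by ring, this]
    have hKrec : K ^ (2 * ((m : ℝ) + 1) + ν) = K ^ (2 * (m : ℝ) + ν) * K ^ 2 := by
      rw [show 2 * ((m : ℝ) + 1) + ν = (2 * (m : ℝ) + ν) + 2 by ring,
        Real.rpow_add hK, Real.rpow_two]
    have hfacrec : ((m + 1).factorial : ℝ) = ((m : ℝ) + 1) * m.factorial := by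
      rw [Nat.factorial_succ]; push_cast; ring
    have hΓ : (0:ℝ) < Real.Gamma ((m : ℝ) + ν + 1) := hΓpos m
    have hf : (0:ℝ) < m.factorial := hfacpos m
    have hratio : B (m + 1)
        = B m * (K ^ 2 * ((m : ℝ) + 2) ^ 2 / (((m : ℝ) + 1) ^ 3 * ((m : ℝ) + ν + 1))) := by
      rw [hB]
      simp only [Nat.cast_add, Nat.cast_one]
      rw [hΓrec, hKrec, hfacrec]
      field_simp
      ring
    have hr : K ^ 2 * ((m : ℝ) + 2) ^ 2 / (((m : ℝ) + 1) ^ 3 * ((m : ℝ) + ν + 1)) ≤ 1/2 := by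
      rw [div_le_iff₀ (by positivity)]
      have h1 : ((m:ℝ) + 2) ^ 2 ≤ 4 * ((m:ℝ) + 1) ^ 2 := by nlinarith
      have h2 : K ^ 2 * (4 * ((m:ℝ) + 1) ^ 2) ≤ ((m:ℝ)/2) * ((m:ℝ) + 1) ^ 2 := by
        nlinarith [sq_nonneg ((m:ℝ) + 1)]
      have h3 : ((m:ℝ)/2) * ((m:ℝ) + 1) ^ 2 ≤ 1/2 * (((m:ℝ) + 1) ^ 3 * ((m:ℝ) + ν + 1)) := by
        have hstep : (m:ℝ) ≤ ((m:ℝ) + 1) * ((m:ℝ) + ν + 1) := by nlinarith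
        nlinarith [mul_le_mul_of_nonneg_right hstep (sq_nonneg ((m:ℝ) + 1))]
      nlinarith [mul_le_mul_of_nonneg_left h1 (sq_nonneg K)]
    calc B (m + 1) = B m * (K ^ 2 * ((m : ℝ) + 2) ^ 2 / (((m : ℝ) + 1) ^ 3 * ((m : ℝ) + ν + 1))) :=
          hratio
      _ ≤ B m * (1/2) := mul_le_mul_of_nonneg_left hr (hBpos m).le
      _ = 1/2 * B m := by ring
  exact hsum.congr fun m => (hBeq m).symm

set_option maxHeartbeats 1000000 in
/-- Key lemma: termwise differentiation of generalized power series solving the ODE. -/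
lemma key_ode (α μ s : ℝ) (hα0 : 0 < α) (hα1 : α < 1) (hμ : 0 < μ)
    (hs0 : 0 ≤ s) (hs1 : s ≤ 1) (hse : s * (s - 1 + α) = 0)
    (A : ℕ → ℝ)
    (hrec : ∀ m : ℕ,
      A (m+1) * ((s + (2-α) * ((m:ℝ)+1)) * (s + (2-α) * (m:ℝ) + 1)) = -μ^2 * A m)
    (hsum : Summable (fun m : ℕ => |A m| * ((m:ℝ)+1)^2))
    (x : ℝ) (hx : x ∈ Ioo (0:ℝ) 1) :
    HasDerivAt (fun y : ℝ => y ^ α *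
        deriv (fun z : ℝ => ∑' m : ℕ, A m * z ^ (s + (2-α) * (m:ℝ))) y)
      (-(μ^2) * ∑' m : ℕ, A m * x ^ (s + (2-α) * (m:ℝ))) x := by
  obtain ⟨hx0, hx1⟩ := hx
  set e : ℕ → ℝ := fun m => s + (2-α) * (m:ℝ) with he
  have he_nonneg : ∀ m : ℕ, 0 ≤ e m := by
    intro m
    have : (0:ℝ) ≤ m := Nat.cast_nonneg m
    simp only [he]; nlinarith
  have he_le : ∀ m : ℕ, e m ≤ (s + 2) * ((m:ℝ) + 1) := by
    intro m
    have : (0:ℝ) ≤ m := Nat.cast_nonneg m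
    simp only [he]; nlinarith
  -- the open set
  set S : Set ℝ := Ioo (x/2) 1 with hS
  have hSopen : IsOpen S := isOpen_Ioo
  have hSconn : IsPreconnected S := isPreconnected_Ioo
  have hxS : x ∈ S := ⟨by linarith, hx1⟩
  have hSpos : ∀ y ∈ S, 0 < y := fun y hy => lt_trans (by linarith) hy.1
  -- Step 1 : termwise derivative of F on S
  have hterm1 : ∀ (m : ℕ) (y : ℝ), y ∈ S →
      HasDerivAt (fun z : ℝ => A m * z ^ (e m)) (A m * (e m * y ^ (e m - 1))) y := by
    intro m y hy
    exact (Real.hasDerivAt_rpow_const (Or.inl (hSpos y hy).ne')).const_mul (A m)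
  have hbound1 : ∀ (m : ℕ) (y : ℝ), y ∈ S →
      ‖A m * (e m * y ^ (e m - 1))‖ ≤ |A m| * (((s+2) * ((m:ℝ)+1)) * (x/2) ^ (s-1)) := by
    intro m y hy
    have hy0 : 0 < y := hSpos y hy
    rw [Real.norm_eq_abs, abs_mul]
    apply mul_le_mul_of_nonneg_left _ (abs_nonneg _)
    have hpow : y ^ (e m - 1) ≤ (x/2) ^ (s - 1) := by
      have hsplit : y ^ (e m - 1) = y ^ (s - 1) * y ^ ((2-α) * (m:ℝ)) := by
        rw [← Real.rpow_add hy0]; congr 1; simp only [he]; ring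
      rw [hsplit]
      have h1 : y ^ (s - 1) ≤ (x/2) ^ (s - 1) :=
        Real.rpow_le_rpow_of_nonpos (by linarith) hy.1.le (by linarith)
      have h2 : y ^ ((2-α) * (m:ℝ)) ≤ 1 :=
        Real.rpow_le_one hy0.le hy.2.le (mul_nonneg (by linarith) (Nat.cast_nonneg m))
      calc y ^ (s-1) * y ^ ((2-α) * (m:ℝ)) ≤ (x/2) ^ (s-1) * 1 :=
            mul_le_mul h1 h2 (Real.rpow_nonneg hy0.le _) (Real.rpow_nonneg (by linarith) _)
        _ = (x/2) ^ (s-1) := mul_one _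
    rw [abs_of_nonneg (mul_nonneg (he_nonneg m) (Real.rpow_nonneg hy0.le _))]
    exact mul_le_mul (he_le m) hpow (Real.rpow_nonneg hy0.le _)
      (by positivity)
  have husum1 : Summable (fun m : ℕ => |A m| * (((s+2) * ((m:ℝ)+1)) * (x/2) ^ (s-1))) := by
    refine Summable.of_nonneg_of_le (fun m => by positivity) (fun m => ?_)
      (hsum.mul_left ((s+2) * (x/2) ^ (s-1)))
    · 
      have h1 : ((m:ℝ)+1) ≤ ((m:ℝ)+1)^2 := by nlinarith [Nat.cast_nonneg (α := ℝ) m]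
      have h2 : (0:ℝ) ≤ (x/2) ^ (s-1) := Real.rpow_nonneg (by linarith) _
      nlinarith [abs_nonneg (A m), mul_le_mul_of_nonneg_left h1
        (mul_nonneg (mul_nonneg (abs_nonneg (A m)) (by linarith : (0:ℝ) ≤ s + 2)) h2)]
  have hsumF : Summable (fun m : ℕ => A m * x ^ (e m)) := by
    apply Summable.of_norm_bounded hsum
    intro m
    rw [Real.norm_eq_abs, abs_mul]
    have h1 : x ^ (e m) ≤ 1 := Real.rpow_le_one hx0.le hx1.le (he_nonneg m)
    have h2 : (1:ℝ) ≤ ((m:ℝ)+1)^2 := by nlinarith [Nat.cast_nonneg (α := ℝ) m]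
    have h3 : |x ^ (e m)| = x ^ (e m) := abs_of_nonneg (Real.rpow_nonneg hx0.le _)
    nlinarith [abs_nonneg (A m), abs_nonneg (x ^ (e m))]
  have hF : ∀ y ∈ S, HasDerivAt (fun z : ℝ => ∑' m : ℕ, A m * z ^ (e m))
      (∑' m : ℕ, A m * (e m * y ^ (e m - 1))) y := by
    intro y hy
    exact hasDerivAt_tsum_of_isPreconnected husum1 hSopen hSconn hterm1 hbound1 hxS hsumF hy
  -- Step 2 : identify y^α * deriv F with G on S
  set G : ℝ → ℝ := fun y => ∑' m : ℕ, (A m * e m) * y ^ (e m - 1 + α) with hG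
  have hEv : ∀ y ∈ S,
      y ^ α * deriv (fun z : ℝ => ∑' m : ℕ, A m * z ^ (e m)) y = G y := by
    intro y hy
    have hy0 : 0 < y := hSpos y hy
    rw [(hF y hy).deriv, hG, ← tsum_mul_left]
    apply tsum_congr
    intro m
    have : y ^ (e m - 1 + α) = y ^ (e m - 1) * y ^ α := by
      rw [← Real.rpow_add hy0]
    rw [this]; ring
  -- Step 3 : termwise derivative of G on S
  have hterm2 : ∀ (m : ℕ) (y : ℝ), y ∈ S →
      HasDerivAt (fun z : ℝ => (A m * e m) * z ^ (e m - 1 + α))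
        ((A m * e m) * ((e m - 1 + α) * y ^ (e m - 1 + α - 1))) y := by
    intro m y hy
    exact (Real.hasDerivAt_rpow_const (Or.inl (hSpos y hy).ne')).const_mul (A m * e m)
  have hzero0 : ∀ y : ℝ, (A 0 * e 0) * ((e 0 - 1 + α) * y ^ (e 0 - 1 + α - 1)) = 0 := by
    intro y
    have he0 : e 0 = s := by simp [he]
    rcases mul_eq_zero.mp hse with h | h
    · rw [he0, h]; ring
    · rw [he0]; rw [show s - 1 + α = 0 from h]; ring
  have hbound2 : ∀ (m : ℕ) (y : ℝ), y ∈ S →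
      ‖(A m * e m) * ((e m - 1 + α) * y ^ (e m - 1 + α - 1))‖
        ≤ |A m| * ((s+3) * ((m:ℝ)+1))^2 := by
    intro m y hy
    have hy0 : 0 < y := hSpos y hy
    match m with
    | 0 =>
      rw [hzero0 y, norm_zero]
      positivity
    | Nat.succ n =>
      rw [Real.norm_eq_abs, abs_mul, abs_mul, abs_mul]
      have hcast : ((n:ℝ) + 1) = ((n.succ : ℕ) : ℝ) := by push_cast; ring
      have hexp : e (n+1) - 1 + α - 1 = e n := by simp only [he]; push_cast; ring
      have hp1 : |e (n+1)| ≤ (s+3) * ((n.succ:ℝ)+1) := by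
        rw [abs_of_nonneg (he_nonneg _)]
        have := he_le (n+1)
        have hc : ((n+1:ℕ):ℝ) = (n:ℝ)+1 := by push_cast; ring
        push_cast
        nlinarith [Nat.cast_nonneg (α := ℝ) n]
      have hp2 : |e (n+1) - 1 + α| ≤ (s+3) * ((n.succ:ℝ)+1) := by
        have h1 : e (n+1) - 1 + α ≤ e (n+1) := by linarith
        have h2 : 0 ≤ e (n+1) - 1 + α := by
          simp only [he]; push_cast; nlinarith [Nat.cast_nonneg (α := ℝ) n]
        rw [abs_of_nonneg h2]
        have := he_le (n+1)
        push_cast at this ⊢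
        nlinarith [Nat.cast_nonneg (α := ℝ) n]
      have hp3 : |y ^ (e (n+1) - 1 + α - 1)| ≤ 1 := by
        rw [hexp, abs_of_nonneg (Real.rpow_nonneg hy0.le _)]
        exact Real.rpow_le_one hy0.le hy.2.le (he_nonneg n)
      calc |A (n+1)| * |e (n+1)| * (|e (n+1) - 1 + α| * |y ^ (e (n+1) - 1 + α - 1)|)
          ≤ |A (n+1)| * ((s+3) * ((n.succ:ℝ)+1)) * (((s+3) * ((n.succ:ℝ)+1)) * 1) := by
            apply mul_le_mul
            · exact mul_le_mul_of_nonneg_left hp1 (abs_nonneg _)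
            · exact mul_le_mul hp2 hp3 (abs_nonneg _) (by positivity)
            · positivity
            · positivity
        _ = |A (n+1)| * ((s+3) * ((n.succ:ℝ)+1))^2 := by ring
  have husum2 : Summable (fun m : ℕ => |A m| * ((s+3) * ((m:ℝ)+1))^2) := by
    apply Summable.congr (f := fun m : ℕ => ((s+3)^2) * (|A m| * ((m:ℝ)+1)^2))
      (hsum.mul_left _)
    intro m; ring
  have hsumG : Summable (fun m : ℕ => (A m * e m) * x ^ (e m - 1 + α)) := by
    apply Summable.of_norm_bounded husum2
    intro m
    match m with
    | 0 =>
      rcases mul_eq_zero.mp hse with h | h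
      · have he0 : e 0 = s := by simp [he]
        rw [Real.norm_eq_abs]
        rw [show (A 0 * e 0) * x ^ (e 0 - 1 + α) = 0 by rw [he0, h]; ring, abs_zero]
        positivity
      · have he0 : e 0 = s := by simp [he]
        have : e 0 - 1 + α = 0 := by rw [he0]; linarith
        rw [Real.norm_eq_abs, this, Real.rpow_zero, mul_one, abs_mul, he0]
        have h1 : |s| ≤ (s+3)^2 * 1 := by rw [abs_of_nonneg hs0]; nlinarith
        have : ((0:ℕ):ℝ) + 1 = 1 := by norm_num
        rw [this]
        calc |A 0| * |s| ≤ |A 0| * ((s+3)^2 * 1) :=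
              mul_le_mul_of_nonneg_left h1 (abs_nonneg _)
          _ = |A 0| * ((s+3) * 1)^2 := by ring
    | Nat.succ n =>
      rw [Real.norm_eq_abs, abs_mul, abs_mul]
      have hexp : 0 ≤ e (n+1) - 1 + α := by
        simp only [he]; push_cast; nlinarith [Nat.cast_nonneg (α := ℝ) n]
      have hp1 : |e (n+1)| ≤ (s+3) * ((n.succ:ℝ)+1) := by
        rw [abs_of_nonneg (he_nonneg _)]
        have := he_le (n+1)
        push_cast at this ⊢
        nlinarith [Nat.cast_nonneg (α := ℝ) n]
      have hp3 : |x ^ (e (n+1) - 1 + α)| ≤ 1 := by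
        rw [abs_of_nonneg (Real.rpow_nonneg hx0.le _)]
        exact Real.rpow_le_one hx0.le hx1.le hexp
      have hle1 : (1:ℝ) ≤ (s+3) * ((n.succ:ℝ)+1) := by
        push_cast; nlinarith [Nat.cast_nonneg (α := ℝ) n]
      calc |A (n+1)| * |e (n+1)| * |x ^ (e (n+1) - 1 + α)|
          ≤ |A (n+1)| * ((s+3) * ((n.succ:ℝ)+1)) * ((s+3) * ((n.succ:ℝ)+1) * 1) := by
            apply mul_le_mul
            · exact mul_le_mul_of_nonneg_left hp1 (abs_nonneg _)
            · calc |x ^ (e (n+1) - 1 + α)| ≤ 1 := hp3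
                _ ≤ (s+3) * ((n.succ:ℝ)+1) * 1 := by rw [mul_one]; exact hle1
            · exact abs_nonneg _
            · positivity
        _ = |A (n+1)| * ((s+3) * ((n.succ:ℝ)+1))^2 := by ring
  have hGderiv : HasDerivAt G
      (∑' m : ℕ, (A m * e m) * ((e m - 1 + α) * x ^ (e m - 1 + α - 1))) x :=
    hasDerivAt_tsum_of_isPreconnected husum2 hSopen hSconn hterm2 hbound2 hxS hsumG hxS
  -- Step 4 : identify the derivative value
  have hsumD : Summable (fun m : ℕ => (A m * e m) * ((e m - 1 + α) * x ^ (e m - 1 + α - 1))) :=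
    Summable.of_norm_bounded husum2 (fun m => hbound2 m x hxS)
  have hval : (∑' m : ℕ, (A m * e m) * ((e m - 1 + α) * x ^ (e m - 1 + α - 1)))
      = -(μ^2) * ∑' m : ℕ, A m * x ^ (e m) := by
    rw [hsumD.tsum_eq_zero_add, hzero0 x, zero_add]
    rw [show -(μ^2) * ∑' m : ℕ, A m * x ^ (e m) = ∑' m : ℕ, -(μ^2) * (A m * x ^ (e m)) from
      tsum_mul_left.symm]
    apply tsum_congr
    intro m
    have hexp : e (m+1) - 1 + α - 1 = e m := by simp only [he]; push_cast; ring
    have hrecm := hrec m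
    have hee : e (m+1) = s + (2-α) * ((m:ℝ)+1) := by simp only [he]; push_cast; ring
    have hee2 : e (m+1) - 1 + α = s + (2-α) * (m:ℝ) + 1 := by
      simp only [he]; push_cast; ring
    rw [hexp, hee2, hee]
    linear_combination x ^ (e m) * hrecm
  -- Conclusion
  have hfinal : HasDerivAt G (-(μ^2) * ∑' m : ℕ, A m * x ^ (e m)) x := hval ▸ hGderiv
  apply hfinal.congr_of_eventuallyEq
  filter_upwards [hSopen.mem_nhds hxS] with y hy
  exact hEv y hy

set_option maxHeartbeats 1000000 in
lemma theta_eq (α μ ν s : ℝ) (hα1 : α < 1) (hμ : 0 < μ)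
    (hνs : (2-α)/2 * ν = s - (1-α)/2) (y : ℝ) (hy : 0 < y) :
    y ^ ((1 - α) / 2) * besselJ ν (2 / (2 - α) * μ * y ^ ((2 - α) / 2))
      = ∑' m : ℕ, (((-1:ℝ) ^ m / (m.factorial * Real.Gamma ((m:ℝ) + ν + 1)))
          * (μ/(2-α)) ^ (2 * (m:ℝ) + ν)) * y ^ (s + (2-α) * (m:ℝ)) := by
  have h2α : (0:ℝ) < 2 - α := by linarith
  rw [besselJ, ← tsum_mul_left]
  apply tsum_congr
  intro m
  have harg : 2 / (2 - α) * μ * y ^ ((2 - α) / 2) / 2 = (μ/(2-α)) * y ^ ((2-α)/2) := by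
    field_simp
  rw [harg, Real.mul_rpow (by positivity) (Real.rpow_nonneg hy.le _),
    ← Real.rpow_mul hy.le]
  rw [show y ^ (s + (2-α)*(m:ℝ)) = y ^ ((1-α)/2) * y ^ ((2-α)/2 * (2*(m:ℝ)+ν)) from by
    rw [← Real.rpow_add hy]; congr 1; linear_combination -hνs]
  ring

set_option maxHeartbeats 1000000 in
lemma rec_aux (α μ ν s : ℝ) (hα1 : α < 1) (hμ : 0 < μ) (hν : -1 < ν)
    (hfac : ∀ m : ℕ, (s + (2-α) * ((m:ℝ)+1)) * (s + (2-α) * (m:ℝ) + 1)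
      = (2-α)^2 * ((m:ℝ)+1) * ((m:ℝ)+ν+1)) :
    ∀ m : ℕ,
      (((-1:ℝ)^(m+1) / ((m+1).factorial * Real.Gamma (((m+1:ℕ):ℝ) + ν + 1)))
        * (μ/(2-α)) ^ (2 * ((m+1:ℕ):ℝ) + ν))
        * ((s + (2-α)*((m:ℝ)+1)) * (s + (2-α)*(m:ℝ) + 1))
      = -μ^2 * (((-1:ℝ)^m / (m.factorial * Real.Gamma ((m:ℝ) + ν + 1)))
        * (μ/(2-α)) ^ (2 * (m:ℝ) + ν)) := by
  intro m
  have h2α : (0:ℝ) < 2 - α := by linarith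
  have hK : (0:ℝ) < μ/(2-α) := by positivity
  have hνpos : (0:ℝ) < (m : ℝ) + ν + 1 := by
    have : (0:ℝ) ≤ m := Nat.cast_nonneg m
    linarith
  have hΓ : (0:ℝ) < Real.Gamma ((m : ℝ) + ν + 1) := Real.Gamma_pos_of_pos hνpos
  have hf : (0:ℝ) < m.factorial := by exact_mod_cast Nat.factorial_pos m
  have hcast : ((m+1:ℕ):ℝ) = (m:ℝ) + 1 := by push_cast; ring
  rw [hcast]
  have hΓrec : Real.Gamma (((m : ℝ) + 1) + ν + 1)
      = ((m : ℝ) + ν + 1) * Real.Gamma ((m : ℝ) + ν + 1) := by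
    have := Real.Gamma_add_one (s := (m : ℝ) + ν + 1) (ne_of_gt hνpos)
    rw [show ((m : ℝ) + 1) + ν + 1 = (m : ℝ) + ν + 1 + 1 by ring, this]
  have hKrec : (μ/(2-α)) ^ (2 * ((m : ℝ) + 1) + ν)
      = (μ/(2-α)) ^ (2 * (m : ℝ) + ν) * (μ/(2-α)) ^ 2 := by
    rw [show 2 * ((m : ℝ) + 1) + ν = (2 * (m : ℝ) + ν) + 2 by ring,
      Real.rpow_add hK, Real.rpow_two]
  have hfacrec : ((m + 1).factorial : ℝ) = ((m : ℝ) + 1) * m.factorial := by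
    rw [Nat.factorial_succ]; push_cast; ring
  rw [hΓrec, hKrec, hfacrec, hfac m, pow_succ]
  field_simp

set_option maxHeartbeats 1000000 in
lemma main_aux (α μ ν s : ℝ) (hα0 : 0 < α) (hα1 : α < 1) (hμ : 0 < μ)
    (hν : -1 < ν) (hs0 : 0 ≤ s) (hs1 : s ≤ 1) (hse : s * (s - 1 + α) = 0)
    (hνs : (2-α)/2 * ν = s - (1-α)/2)
    (hfac : ∀ m : ℕ, (s + (2-α) * ((m:ℝ)+1)) * (s + (2-α) * (m:ℝ) + 1)
      = (2-α)^2 * ((m:ℝ)+1) * ((m:ℝ)+ν+1))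
    (x : ℝ) (hx : x ∈ Ioo (0:ℝ) 1) :
    HasDerivAt (fun y : ℝ => y ^ α *
        deriv (fun z : ℝ =>
          z ^ ((1 - α) / 2) * besselJ ν (2 / (2 - α) * μ * z ^ ((2 - α) / 2))) y)
      (-(μ^2) * (x ^ ((1 - α) / 2) * besselJ ν (2 / (2 - α) * μ * x ^ ((2 - α) / 2)))) x := by
  have h2α : (0:ℝ) < 2 - α := by linarith
  have hK : (0:ℝ) < μ / (2 - α) := by positivity
  set A : ℕ → ℝ := fun m => ((-1:ℝ)^m / (m.factorial * Real.Gamma ((m:ℝ) + ν + 1)))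
    * (μ/(2-α)) ^ (2 * (m:ℝ) + ν) with hA
  have hrec : ∀ m : ℕ,
      A (m+1) * ((s + (2-α) * ((m:ℝ)+1)) * (s + (2-α) * (m:ℝ) + 1)) = -μ^2 * A m := by
    intro m
    exact rec_aux α μ ν s hα1 hμ hν hfac m
  have hsum : Summable (fun m : ℕ => |A m| * ((m:ℝ)+1)^2) :=
    besselAux_summable (μ/(2-α)) ν hK hν
  have hkey := key_ode α μ s hα0 hα1 hμ hs0 hs1 hse A hrec hsum x hx
  have hEq : ∀ y : ℝ, 0 < y →
      y ^ ((1 - α) / 2) * besselJ ν (2 / (2 - α) * μ * y ^ ((2 - α) / 2))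
        = ∑' m : ℕ, A m * y ^ (s + (2-α) * (m:ℝ)) := fun y hy =>
    theta_eq α μ ν s hα1 hμ hνs y hy
  have hderiv : ∀ y : ℝ, 0 < y →
      deriv (fun z : ℝ =>
          z ^ ((1 - α) / 2) * besselJ ν (2 / (2 - α) * μ * z ^ ((2 - α) / 2))) y
        = deriv (fun z : ℝ => ∑' m : ℕ, A m * z ^ (s + (2-α) * (m:ℝ))) y := by
    intro y hy
    apply Filter.EventuallyEq.deriv_eq
    exact Filter.eventuallyEq_of_mem (Ioi_mem_nhds hy) (fun z hz => hEq z hz)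
  rw [show -(μ^2) * (x ^ ((1 - α) / 2) * besselJ ν (2 / (2 - α) * μ * x ^ ((2 - α) / 2)))
      = -(μ^2) * ∑' m : ℕ, A m * x ^ (s + (2-α) * (m:ℝ)) from by rw [hEq x hx.1]]
  apply hkey.congr_of_eventuallyEq
  filter_upwards [Ioi_mem_nhds hx.1] with y hy
  rw [hderiv y hy]

/-- For `0 < α < 1` and `μ > 0`, the functions `θ₊` and `θ₋` solve the
degenerate equation `(xᵅ θ')' = -μ² θ` on `(0,1)`, i.e. they are solutions of
`λ v + (xᵅ v')' = 0` with `λ = μ²`. -/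
theorem stmt10 (α μ : ℝ) (hα0 : 0 < α) (hα1 : α < 1) (hμ : 0 < μ) :
    ∀ x ∈ Ioo (0:ℝ) 1,
      HasDerivAt (fun y : ℝ => y ^ α * deriv (thetaP α μ) y)
        (-(μ ^ 2) * thetaP α μ x) x ∧
      HasDerivAt (fun y : ℝ => y ^ α * deriv (thetaM α μ) y)
        (-(μ ^ 2) * thetaM α μ x) x := by
  intro x hx
  have h2α : (0:ℝ) < 2 - α := by linarith
  have h1α : (0:ℝ) < 1 - α := by linarith
  constructor
  · have hν : -1 < (1-α)/(2-α) := by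
      have : (0:ℝ) < (1-α)/(2-α) := by positivity
      linarith
    exact main_aux α μ ((1-α)/(2-α)) (1-α) hα0 hα1 hμ hν (by linarith) (by linarith)
      (by ring) (by field_simp; ring) (fun m => by field_simp; ring) x hx
  · have hlt : (1-α)/(2-α) < 1 := (div_lt_one h2α).mpr (by linarith)
    have hν : -1 < -((1-α)/(2-α)) := by linarith
    exact main_aux α μ (-((1-α)/(2-α))) 0 hα0 hα1 hμ hν le_rfl (by norm_num)
      (by ring) (by field_simp; ring) (fun m => by field_simp; ring) x hx
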